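/- Let F be a 3-satisfiable weighted CNF formula in which every unit clause is positive (of the form {x}). Consider the random assignment alpha setting each unit variable (a variable appearing in a unit clause) to true independently with probability 2/3, and every other variable to true independently with probability 1/2. Then for every hard clause C (a unit clause {x}, or a two-literal clause of the form {not x, y} or {not x, not y} with x a unit variable and y not a unit variable), the probability that alpha satisfies C is at least 2/3. -/

import Mathlib

open Classical

/-- A clause: a finite set of literals, each a (variable, polarity) pair. -/
abbrev Clause := Finset (ℕ × Bool)

/-- A truth assignment satisfies a clause if some literal evaluates to true. -/
def SatC (τ : ℕ → Bool) (C : Clause) : Prop := ∃ l ∈ C, τ l.1 = l.2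

/-- A CNF formula: clauses are nonempty and contain no variable together with its negation. -/
def IsCNF (F : Finset Clause) : Prop :=
  ∀ C ∈ F, C.Nonempty ∧ ∀ v : ℕ, ¬((v, true) ∈ C ∧ (v, false) ∈ C)

/-- Total weight of a set of clauses. -/
def wt (w : Clause → ℕ) (G : Finset Clause) : ℕ := ∑ C ∈ G, w C

/-- Total weight of the clauses of `G` satisfied by `τ`. -/
noncomputable def satWt (w : Clause → ℕ) (τ : ℕ → Bool) (G : Finset Clause) : ℕ :=
  ∑ C ∈ G.filter (fun C => SatC τ C), w C

/-- `F` is 2-satisfiable. -/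
def Sat2 (F : Finset Clause) : Prop :=
  ∀ C1 ∈ F, ∀ C2 ∈ F, ∃ τ, SatC τ C1 ∧ SatC τ C2

/-- `F` is 3-satisfiable. -/
def Sat3 (F : Finset Clause) : Prop :=
  ∀ C1 ∈ F, ∀ C2 ∈ F, ∀ C3 ∈ F, ∃ τ, SatC τ C1 ∧ SatC τ C2 ∧ SatC τ C3

/-- The set of variables of a formula. -/
def vars (F : Finset Clause) : Finset ℕ := F.sup (fun C => C.image Prod.fst)

/-- The set of clauses of `F` containing a variable of `U`. -/
noncomputable def FU (F : Finset Clause) (U : Finset ℕ) : Finset Clause :=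
  F.filter (fun C => ∃ l ∈ C, l.1 ∈ U)

/-- Unit variables: variables occurring in unit clauses. -/
def unitVars (F : Finset Clause) : Finset ℕ :=
  (F.filter (fun C => C.card = 1)).sup (fun C => C.image Prod.fst)

/-- All unit clauses of `F` are positive. -/
def UnitPos (F : Finset Clause) : Prop :=
  ∀ C ∈ F, C.card = 1 → ∃ x, C = {(x, true)}

/-- A hard clause: a positive unit clause, or a two-literal clause `{¬x, y}` / `{¬x, ¬y}`
with `x` a unit variable and `y` not a unit variable. -/
def IsHard (F : Finset Clause) (C : Clause) : Prop :=
  (∃ x, C = {(x, true)}) ∨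
  (∃ x ∈ unitVars F, ∃ y ∉ unitVars F, ∃ b : Bool, C = {(x, false), (y, b)})

/-- The soft (non-hard) clauses of `F`. -/
noncomputable def softF (F : Finset Clause) : Finset Clause :=
  F.filter (fun C => ¬ IsHard F C)

/-- Two-literal hard clauses. -/
noncomputable def F2set (F : Finset Clause) : Finset Clause :=
  F.filter (fun C => ∃ x ∈ unitVars F, ∃ y ∉ unitVars F, ∃ b : Bool, C = {(x, false), (y, b)})

/-- Non-unit variables occurring in two-literal hard clauses. -/
noncomputable def V2set (F : Finset Clause) : Finset ℕ :=
  ((F2set F).sup (fun C => C.image Prod.fst)) \ unitVars F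

/-- `F` is a hard formula: every clause is hard. -/
def HardFormula (F : Finset Clause) : Prop := ∀ C ∈ F, IsHard F C

/-- `F` is expanding: every set `X` of variables is covered by clauses of total weight at least `|X|`. -/
def Expanding (F : Finset Clause) (w : Clause → ℕ) : Prop :=
  ∀ X ⊆ vars F, X.card ≤ wt w (FU F X)

/-- Extend an assignment on the variables of `F` to all of `ℕ`. -/
noncomputable def extAssign (F : Finset Clause) (α : {v // v ∈ vars F} → Bool) : ℕ → Bool :=
  fun n => if h : n ∈ vars F then α ⟨n, h⟩ else false

/-- The probability that the random assignment (unit variables true with probability 2/3,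
other variables true with probability 1/2, independently) satisfies the clause `C`. -/
noncomputable def probSat (F : Finset Clause) (C : Clause) : ℝ :=
  ∑ α : {v // v ∈ vars F} → Bool,
    (∏ v : {v // v ∈ vars F},
      (if (v : ℕ) ∈ unitVars F then (if α v then (2:ℝ)/3 else 1/3) else 1/2)) *
    (if SatC (extAssign F α) C then 1 else 0)

section AuxStmt10

lemma sum_pi_bool_stmt10 {I : Type*} [Fintype I] [DecidableEq I] (f : I → Bool → ℝ) :
    ∑ α : I → Bool, ∏ v, f v (α v) = ∏ v, ∑ b, f v b := by
  rw [Finset.prod_univ_sum, Fintype.piFinset_univ]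

lemma expectation_factor_stmt10 {I : Type*} [Fintype I] [DecidableEq I] (p h : I → Bool → ℝ) :
    ∑ α : I → Bool, (∏ v, p v (α v)) * (∏ v, h v (α v)) = ∏ v, ∑ b, p v b * h v b := by
  rw [← sum_pi_bool_stmt10 fun v b => p v b * h v b]
  exact Finset.sum_congr rfl fun α _ => (Finset.prod_mul_distrib).symm

end AuxStmt10

theorem stmt10 (F : Finset Clause) (w : Clause → ℕ)
    (hF : IsCNF F) (hw : ∀ C ∈ F, 0 < w C) (h3 : Sat3 F) (hup : UnitPos F)
    (C : Clause) (hC : C ∈ F) (hhard : IsHard F C) :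
    (2:ℝ)/3 ≤ probSat F C := by
  classical
  set P : {v // v ∈ vars F} → Bool → ℝ :=
    fun v c => if (v : ℕ) ∈ unitVars F then (if c then (2:ℝ)/3 else 1/3) else 1/2 with hPdef
  have hPsum : ∀ v : {v // v ∈ vars F}, (∑ c : Bool, P v c) = 1 := by
    intro v
    rw [Fintype.sum_bool]
    by_cases hv : (v : ℕ) ∈ unitVars F <;> simp [hPdef, hv] <;> norm_num
  have hPsum2 : ∀ v : {v // v ∈ vars F}, P v true + P v false = 1 := fun v => by
    rw [← hPsum v, Fintype.sum_bool]
  rcases hhard with ⟨x, hCeq⟩ | ⟨x, hxu, y, hyu, b, hCeq⟩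
  · -- unit clause case
    have hxC : (x, true) ∈ C := by rw [hCeq]; exact Finset.mem_singleton_self _
    have hxv : x ∈ vars F :=
      Finset.mem_sup.2 ⟨C, hC, Finset.mem_image.2 ⟨(x, true), hxC, rfl⟩⟩
    have hxu : x ∈ unitVars F := by
      refine Finset.mem_sup.2 ⟨C, Finset.mem_filter.2 ⟨hC, ?_⟩,
        Finset.mem_image.2 ⟨(x, true), hxC, rfl⟩⟩
      rw [hCeq]; simp
    set x0 : {v // v ∈ vars F} := ⟨x, hxv⟩ with hx0
    set H : {v // v ∈ vars F} → Bool → ℝ :=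
      fun v c => if v = x0 then (if c = true then (1:ℝ) else 0) else 1 with hHdef
    have hind : ∀ α : {v // v ∈ vars F} → Bool,
        (if SatC (extAssign F α) C then (1:ℝ) else 0) = ∏ v, H v (α v) := by
      intro α
      rw [Finset.prod_eq_single x0 (fun v _ hv => by simp [hHdef, hv])
        (fun h => absurd (Finset.mem_univ _) h)]
      have hiff : SatC (extAssign F α) C ↔ α x0 = true := by
        simp [SatC, hCeq, extAssign, hxv, hx0]
      rw [if_congr hiff rfl rfl]
      by_cases hb : α x0 = true <;> simp [hHdef, hb]
    have hps : probSat F C = ∏ v, ∑ c, P v c * H v c := by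
      rw [← expectation_factor_stmt10]
      unfold probSat
      exact Finset.sum_congr rfl fun α _ => by rw [hind α]
    rw [hps, Finset.prod_eq_single x0 (fun v _ hv => by simp [hHdef, hv, hPsum2 v])
      (fun h => absurd (Finset.mem_univ _) h)]
    rw [Fintype.sum_bool]
    simp [hHdef, hPdef, hxu, hx0]
  · -- two-literal hard clause case
    have hxC : (x, false) ∈ C := by rw [hCeq]; simp
    have hyC : (y, b) ∈ C := by rw [hCeq]; simp
    have hxv : x ∈ vars F :=
      Finset.mem_sup.2 ⟨C, hC, Finset.mem_image.2 ⟨(x, false), hxC, rfl⟩⟩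
    have hyv : y ∈ vars F :=
      Finset.mem_sup.2 ⟨C, hC, Finset.mem_image.2 ⟨(y, b), hyC, rfl⟩⟩
    have hxy : x ≠ y := fun h => hyu (h ▸ hxu)
    set x0 : {v // v ∈ vars F} := ⟨x, hxv⟩ with hx0
    set y0 : {v // v ∈ vars F} := ⟨y, hyv⟩ with hy0
    have hne : x0 ≠ y0 := fun h => hxy (congrArg Subtype.val h)
    set H : {v // v ∈ vars F} → Bool → ℝ :=
      fun v c => if v = x0 then (if c = true then (1:ℝ) else 0)
        else if v = y0 then (if c = !b then 1 else 0) else 1 with hHdef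
    have hsat : ∀ α : {v // v ∈ vars F} → Bool,
        (if SatC (extAssign F α) C then (1:ℝ) else 0)
          = 1 - (if α x0 = true then (1:ℝ) else 0) * (if α y0 = !b then 1 else 0) := by
      intro α
      have h1 : extAssign F α x = α x0 := by simp [extAssign, hxv, hx0]
      have h2 : extAssign F α y = α y0 := by simp [extAssign, hyv, hy0]
      have hiff : SatC (extAssign F α) C ↔ (α x0 = false ∨ α y0 = b) := by
        simp [SatC, hCeq, h1, h2]
      rw [if_congr hiff rfl rfl]
      rcases Bool.eq_false_or_eq_true (α x0) with h | h <;>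
        rcases Bool.eq_false_or_eq_true (α y0) with h' | h' <;>
          cases b <;> simp [h, h']
    have hfail : ∀ α : {v // v ∈ vars F} → Bool,
        (if α x0 = true then (1:ℝ) else 0) * (if α y0 = !b then 1 else 0)
          = ∏ v, H v (α v) := by
      intro α
      rw [← Finset.prod_subset (Finset.subset_univ ({x0, y0} : Finset _))
        (fun v _ hv => ?_), Finset.prod_pair hne]
      · simp [hHdef, hne, hne.symm]
      · simp only [Finset.mem_insert, Finset.mem_singleton, not_or] at hv
        simp [hHdef, hv.1, hv.2]
    have hps : probSat F C
        = (∑ α : {v // v ∈ vars F} → Bool, ∏ v, P v (α v))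
          - ∑ α : {v // v ∈ vars F} → Bool, (∏ v, P v (α v)) * ∏ v, H v (α v) := by
      unfold probSat
      rw [← Finset.sum_sub_distrib]
      refine Finset.sum_congr rfl fun α _ => ?_
      rw [hsat α, ← hfail α]
      ring
    rw [hps, sum_pi_bool_stmt10, Finset.prod_eq_one (fun v _ => hPsum v),
      expectation_factor_stmt10]
    have hprod : (∏ v, ∑ c, P v c * H v c) = (2:ℝ)/3 * (1/2) := by
      rw [← Finset.prod_subset (Finset.subset_univ ({x0, y0} : Finset _))
        (fun v hv' hv => ?_), Finset.prod_pair hne]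
      · congr 1
        · rw [Fintype.sum_bool]; simp [hHdef, hPdef, hxu, hx0]
        · rw [Fintype.sum_bool]
          cases b <;> simp [hHdef, hPdef, hyu, hne.symm, hy0, hx0, hxy.symm]
      · simp only [Finset.mem_insert, Finset.mem_singleton, not_or] at hv
        simp [hHdef, hv.1, hv.2, hPsum2 v]
    rw [hprod]
    norm_num
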